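/- Let T be a linear operator on ℂ^d such that ‖T x‖ ≤ ‖x‖ for all x, and such that ‖T x‖ = ‖x‖ implies T x = x. Then the powers T^k converge, as k → ∞, to the orthogonal projection onto the fixed-point subspace {x ∈ ℂ^d : T x = x} = ker(I − T); that is, for every y ∈ ℂ^d, T^k y converges to the orthogonal projection of y onto ker(I − T). -/

import Mathlib

open Filter Topology

set_option maxHeartbeats 1000000 in
/-- If `T` is a linear operator on `ℂ^d` with `‖T x‖ ≤ ‖x‖` for all `x` and such
that `‖T x‖ = ‖x‖` implies `T x = x`, then the powers `T^k` converge strongly to the orthogonal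
projection onto the fixed-point subspace `ker(I - T)`. -/
theorem stmt_10 {d : ℕ} (T : EuclideanSpace ℂ (Fin d) →ₗ[ℂ] EuclideanSpace ℂ (Fin d))
    (hcon : ∀ x, ‖T x‖ ≤ ‖x‖) (hfix : ∀ x, ‖T x‖ = ‖x‖ → T x = x) :
    ∀ y : EuclideanSpace ℂ (Fin d),
      Filter.Tendsto (fun k => (T ^ k) y) Filter.atTop
        (nhds ((Submodule.orthogonalProjectionOnto (LinearMap.ker (LinearMap.id - T)) y :
          EuclideanSpace ℂ (Fin d)))) := by
  set E := EuclideanSpace ℂ (Fin d)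
  set K := LinearMap.ker (LinearMap.id - T) with hK
  have hmemK : ∀ x : E, x ∈ K ↔ T x = x := by
    intro x
    simp only [hK, LinearMap.mem_ker, LinearMap.sub_apply, LinearMap.id_apply, sub_eq_zero]
    exact eq_comm
  set A := LinearMap.toContinuousLinearMap T with hA
  have hAx : ∀ x : E, A x = T x := fun x => rfl
  have hAnorm : ‖A‖ ≤ 1 := A.opNorm_le_bound zero_le_one (fun x => by rw [hAx, one_mul]; exact hcon x)
  set B := ContinuousLinearMap.adjoint A with hB
  have hBnorm : ∀ y : E, ‖B y‖ ≤ ‖y‖ := by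
    intro y
    calc ‖B y‖ ≤ ‖B‖ * ‖y‖ := B.le_opNorm y
    _ ≤ 1 * ‖y‖ := by
        gcongr
        calc ‖B‖ = ‖A‖ := (ContinuousLinearMap.adjoint : _).norm_map A
        _ ≤ 1 := hAnorm
    _ = ‖y‖ := one_mul _
  have hadj_fix : ∀ x : E, x ∈ K → B x = x := by
    intro x hx
    have hTx : T x = x := (hmemK x).1 hx
    have hinner : (inner ℂ (B x) x : ℂ) = inner ℂ x x := by
      rw [hB, ContinuousLinearMap.adjoint_inner_left, hAx, hTx]
    have h1 : ‖B x - x‖ ^ 2 ≤ 0 := by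
      rw [@norm_sub_sq ℂ]
      have hre : RCLike.re (inner ℂ (B x) x : ℂ) = ‖x‖ ^ 2 := by
        rw [hinner]; exact inner_self_eq_norm_sq (𝕜 := ℂ) x
      rw [hre]
      nlinarith [hBnorm x, norm_nonneg (B x), norm_nonneg x]
    have h2 : ‖B x - x‖ = 0 := by nlinarith [norm_nonneg (B x - x)]
    rwa [norm_eq_zero, sub_eq_zero] at h2
  have hinv : ∀ q : E, q ∈ Kᗮ → T q ∈ Kᗮ := by
    intro q hq
    intro u hu
    have : (inner ℂ u (T q) : ℂ) = inner ℂ u q := by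
      rw [← hAx, ← ContinuousLinearMap.adjoint_inner_left, ← hB, hadj_fix u hu]
    rw [this]
    exact hq u hu
  have hcontr : ∃ r : ℝ, 0 ≤ r ∧ r < 1 ∧ ∀ q ∈ Kᗮ, ‖T q‖ ≤ r * ‖q‖ := by
    by_cases hbot : (Kᗮ : Submodule ℂ E) = ⊥
    · refine ⟨0, le_refl 0, by norm_num, fun q hq => ?_⟩
      rw [hbot, Submodule.mem_bot] at hq
      simp [hq]
    · obtain ⟨v, hvmem, hv0⟩ := Submodule.exists_mem_ne_zero_of_ne_bot hbot
      have : Nontrivial (Kᗮ : Submodule ℂ E) := ⟨⟨⟨v, hvmem⟩, 0, by simpa using hv0⟩⟩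
      have hScomp : IsCompact (Metric.sphere (0 : Kᗮ) 1) := isCompact_sphere _ _
      have hSne : (Metric.sphere (0 : Kᗮ) 1).Nonempty :=
        NormedSpace.sphere_nonempty.2 zero_le_one
      have hfc : Continuous (fun q : Kᗮ => ‖T q‖) := by
        have : Continuous T := T.continuous_of_finiteDimensional
        exact (this.comp continuous_subtype_val).norm
      obtain ⟨q₀, hq₀S, hq₀max⟩ := hScomp.exists_isMaxOn hSne hfc.continuousOn
      have hq₀norm : ‖(q₀ : E)‖ = 1 := mem_sphere_zero_iff_norm.1 hq₀S
      set r := ‖T (q₀ : E)‖ with hr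
      have hr0 : 0 ≤ r := norm_nonneg _
      have hr1 : r < 1 := by
        rcases lt_or_eq_of_le (by simpa [hq₀norm] using hcon (q₀ : E)) with h | h
        · simpa [hq₀norm] using h
        · exfalso
          have hfix' : T (q₀ : E) = q₀ := hfix _ (by rw [h, hq₀norm])
          have : (q₀ : E) ∈ K := (hmemK _).2 hfix'
          have hq0 : (q₀ : E) = 0 := by
            have := Submodule.inner_right_of_mem_orthogonal this q₀.2
            exact inner_self_eq_zero.mp this
          rw [hq0] at hq₀norm
          simp at hq₀norm
      refine ⟨r, hr0, hr1, fun q hq => ?_⟩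
      rcases eq_or_ne q 0 with rfl | hq0
      · simp
      · have hnq : ‖q‖ ≠ 0 := norm_ne_zero_iff.2 hq0
        set u : E := (‖q‖⁻¹ : ℂ) • q with hu
        have humem : u ∈ Kᗮ := Kᗮ.smul_mem _ hq
        have hunorm : ‖u‖ = 1 := by
          simp [hu, norm_smul, inv_mul_cancel₀ hnq]
        have hmem : (⟨u, humem⟩ : Kᗮ) ∈ Metric.sphere (0 : Kᗮ) 1 := by
          rw [mem_sphere_zero_iff_norm]
          exact hunorm
        have hle : ‖T u‖ ≤ r := by
          have h := hq₀max hmem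
          simp only [Set.mem_setOf_eq] at h
          exact h
        have hTuq : T q = (‖q‖ : ℂ) • T u := by
          rw [hu, map_smul, smul_smul]
          rw [mul_inv_cancel₀ (by exact_mod_cast hnq)]
          simp
        rw [hTuq]
        rw [norm_smul]
        simp only [Complex.norm_real, Real.norm_eq_abs, abs_norm]
        calc ‖q‖ * ‖T u‖ ≤ ‖q‖ * r := by gcongr
        _ = r * ‖q‖ := mul_comm _ _
  intro y
  obtain ⟨r, hr0, hr1, hr⟩ := hcontr
  set p : E := (K.orthogonalProjectionOnto y : E) with hp
  have hpK : p ∈ K := (K.orthogonalProjectionOnto y).2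
  have hqK : y - p ∈ Kᗮ := by exact K.sub_starProjection_mem_orthogonal y
  have hTp : ∀ k, (T ^ k) p = p := by
    intro k; induction k with
    | zero => simp
    | succ n ih =>
      rw [pow_succ, Module.End.mul_apply, (hmemK p).1 hpK, ih]
  have hbound : ∀ k, (T ^ k) (y - p) ∈ Kᗮ ∧ ‖(T ^ k) (y - p)‖ ≤ r ^ k * ‖y - p‖ := by
    intro k; induction k with
    | zero => simpa using hqK
    | succ n ih =>
      rw [pow_succ', Module.End.mul_apply]
      refine ⟨hinv _ ih.1, ?_⟩
      calc ‖T ((T ^ n) (y - p))‖ ≤ r * ‖(T ^ n) (y - p)‖ := hr _ ih.1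
      _ ≤ r * (r ^ n * ‖y - p‖) := by gcongr; exact ih.2
      _ = r ^ (n + 1) * ‖y - p‖ := by ring
  have hzero : Tendsto (fun k => (T ^ k) (y - p)) atTop (nhds (0 : E)) := by
    rw [tendsto_zero_iff_norm_tendsto_zero]
    have hlim : Tendsto (fun k => r ^ k * ‖y - p‖) atTop (nhds 0) := by
      simpa using (tendsto_pow_atTop_nhds_zero_of_lt_one hr0 hr1).mul_const ‖y - p‖
    exact squeeze_zero (fun k => norm_nonneg _) (fun k => (hbound k).2) hlim
  have hfinal : Tendsto (fun k => p + (T ^ k) (y - p)) atTop (nhds (p + 0)) :=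
    tendsto_const_nhds.add hzero
  have heq : (fun k => (T ^ k) y) = fun k => p + (T ^ k) (y - p) := by
    funext k
    rw [map_sub, hTp k]
    abel
  rw [heq]
  simpa using hfinal
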